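/- In the root lattice of type D_n (n ≥ 5 odd), for the distinguished data of the case dc*(n): with Σ = {α_1+α_2, α_2+α_3, …, α_{n-3}+α_{n-2}, α_{n-2}+α_{n-1}, α_{n-2}+α_n}, the set of indecomposable elements of the semigroup {Σ c_i(α_i+α_{i+1}) : c_i ≥ 0, c_i = c_{i+1} for all odd i, 1 ≤ i ≤ n−3} (intersected with the relevant sublattice) equals {α_1+2α_2+α_3, α_3+2α_4+α_5, …, α_{n-4}+2α_{n-3}+α_{n-2}}. -/
import Mathlib


/-!
STATEMENT 12: In the root lattice of type `D_n` (`n ≥ 5` odd), for the case `dc*(n)`: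
the set of indecomposable elements of the semigroup
`{Σ c_i(α_i+α_{i+1}) : c_i ≥ 0, c_i = c_{i+1} for all odd i, 1 ≤ i ≤ n−3}`
(nonnegative integral combinations, i.e. intersected with the lattice `Ξ = ⟨Σ⟩`)
equals `{α_1+2α_2+α_3, α_3+2α_4+α_5, …, α_{n-4}+2α_{n-3}+α_{n-2}}`.

Elements of the root lattice are encoded by their coefficient function `ℕ → ℕ`
with respect to the simple roots `α_1, …, α_n` (index `0` unused), so that
`Σ_{i=1}^{n-3} c_i (α_i + α_{i+1})` has `j`-th coefficient `c_{j-1} + c_j`.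
-/

namespace Stmt12

/-- membership in the semigroup of the case `dc*(n)` -/
def semMem (n : ℕ) (x : ℕ → ℕ) : Prop :=
  ∃ c : ℕ → ℕ,
    (∀ i, (i < 1 ∨ n - 3 < i) → c i = 0) ∧
    (∀ i, Odd i → i ∈ Finset.Icc 1 (n - 3) → c i = c (i + 1)) ∧
    x = fun j => c (j - 1) + c j

/-- `x` is an indecomposable element of the semigroup -/
def Indec (n : ℕ) (x : ℕ → ℕ) : Prop :=
  semMem n x ∧ x ≠ 0 ∧
    ∀ a b : ℕ → ℕ, semMem n a → semMem n b → x = a + b → a = 0 ∨ b = 0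

/-- the coefficient function of `α_{2j-1} + 2α_{2j} + α_{2j+1}` -/
def dThree (j : ℕ) : ℕ → ℕ := fun k =>
  if k = 2 * j - 1 then 1 else if k = 2 * j then 2 else if k = 2 * j + 1 then 1 else 0

private lemma all_zero (n : ℕ) (c : ℕ → ℕ)
    (hsupp : ∀ i, (i < 1 ∨ n - 3 < i) → c i = 0)
    (hcon : ∀ i, Odd i → i ∈ Finset.Icc 1 (n - 3) → c i = c (i + 1))
    (h0 : ∀ i, Odd i → i ∈ Finset.Icc 1 (n - 3) → c i = 0) :
    ∀ i, c i = 0 := by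
  intro i
  by_cases h1 : i < 1 ∨ n - 3 < i
  · exact hsupp i h1
  · push_neg at h1
    rcases Nat.even_or_odd i with ⟨r, hr⟩ | ho
    · have hio : Odd (i - 1) := ⟨r - 1, by omega⟩
      have hmem : i - 1 ∈ Finset.Icc 1 (n - 3) := Finset.mem_Icc.mpr ⟨by omega, by omega⟩
      have h2 := hcon (i - 1) hio hmem
      have h3 := h0 (i - 1) hio hmem
      rw [show i - 1 + 1 = i from by omega] at h2
      omega
    · exact h0 i ho (Finset.mem_Icc.mpr ⟨by omega, by omega⟩)

private lemma dThree_eq (j : ℕ) (hj : 1 ≤ j) (k : ℕ) :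
    dThree j k = (if k - 1 = 2 * j - 1 ∨ k - 1 = 2 * j then 1 else 0)
      + (if k = 2 * j - 1 ∨ k = 2 * j then 1 else 0) := by
  simp only [dThree]
  split_ifs <;> omega

private lemma semMem_dThree (n j : ℕ)
    (hj1 : 1 ≤ j) (hj3 : 2 * j ≤ n - 3) : semMem n (dThree j) := by
  refine ⟨fun i => if i = 2 * j - 1 ∨ i = 2 * j then 1 else 0, ?_, ?_, ?_⟩
  · intro i hi
    simp only []
    rw [if_neg (by omega)]
  · intro i hoi hmem
    obtain ⟨k, hk'⟩ := hoi
    rw [Finset.mem_Icc] at hmem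
    simp only []
    split_ifs <;> omega
  · funext k
    exact dThree_eq j hj1 k

theorem indecomposables_of_dcStar (n : ℕ) (h5 : 5 ≤ n) (hodd : Odd n) :
    {x : ℕ → ℕ | Indec n x} =
      {x : ℕ → ℕ | ∃ j ∈ Finset.Icc 1 ((n - 3) / 2), x = dThree j} := by
  obtain ⟨t, ht⟩ := hodd
  ext x
  simp only [Set.mem_setOf_eq]
  constructor
  · rintro ⟨⟨c, hsupp, hcon, rfl⟩, hne, hind⟩
    obtain ⟨j, hj1, hj2, hcj⟩ :
        ∃ j, 1 ≤ j ∧ 2 * j - 1 ≤ n - 3 ∧ c (2 * j - 1) ≠ 0 := by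
      by_contra hc
      push_neg at hc
      have h0 : ∀ i, Odd i → i ∈ Finset.Icc 1 (n - 3) → c i = 0 := by
        intro i hoi hmem
        obtain ⟨k, hk'⟩ := hoi
        rw [Finset.mem_Icc] at hmem
        have := hc (k + 1) (by omega) (by omega)
        rwa [show 2 * (k + 1) - 1 = i from by omega] at this
      have hall := all_zero n c hsupp hcon h0
      exact hne (by funext k; simp [hall])
    have hj3 : 2 * j ≤ n - 3 := by omega
    have hj2' : j ≤ (n - 3) / 2 := by omega
    have hoddj : Odd (2 * j - 1) := ⟨j - 1, by omega⟩
    have hmemj : 2 * j - 1 ∈ Finset.Icc 1 (n - 3) := Finset.mem_Icc.mpr ⟨by omega, hj2⟩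
    have heq : c (2 * j - 1) = c (2 * j) := by
      have := hcon (2 * j - 1) hoddj hmemj
      rwa [show 2 * j - 1 + 1 = 2 * j from by omega] at this
    have hcsplit : ∀ i, c i =
        (if i = 2 * j - 1 ∨ i = 2 * j then 1 else 0)
          + (if i = 2 * j - 1 ∨ i = 2 * j then c i - 1 else c i) := by
      intro i
      by_cases h : i = 2 * j - 1 ∨ i = 2 * j
      · rw [if_pos h, if_pos h]
        rcases h with h | h <;> subst h <;> omega
      · rw [if_neg h, if_neg h]; omega
    have hsa : semMem n (dThree j) := semMem_dThree n j hj1 hj3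
    have hsb : semMem n (fun k =>
        (if k - 1 = 2 * j - 1 ∨ k - 1 = 2 * j then c (k - 1) - 1 else c (k - 1))
          + (if k = 2 * j - 1 ∨ k = 2 * j then c k - 1 else c k)) := by
      refine ⟨fun i => if i = 2 * j - 1 ∨ i = 2 * j then c i - 1 else c i, ?_, ?_, rfl⟩
      · intro i hi
        simp only []
        rw [if_neg (by omega)]
        exact hsupp i hi
      · intro i hoi hmem
        obtain ⟨k, hk'⟩ := hoi
        have hci := hcon i ⟨k, hk'⟩ hmem
        rw [Finset.mem_Icc] at hmem
        simp only []
        split_ifs <;> omega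
    have hxab : (fun k => c (k - 1) + c k) = dThree j + (fun k =>
        (if k - 1 = 2 * j - 1 ∨ k - 1 = 2 * j then c (k - 1) - 1 else c (k - 1))
          + (if k = 2 * j - 1 ∨ k = 2 * j then c k - 1 else c k)) := by
      funext k
      simp only [Pi.add_apply]
      rw [dThree_eq j hj1 k]
      conv_lhs => rw [hcsplit (k - 1), hcsplit k]
      omega
    rcases hind (dThree j) _ hsa hsb hxab with h0 | h0
    · exfalso
      have h2 := congrFun h0 (2 * j)
      simp only [dThree, Pi.zero_apply] at h2
      split_ifs at h2
    · refine ⟨j, Finset.mem_Icc.mpr ⟨hj1, hj2'⟩, ?_⟩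
      rw [hxab, h0, add_zero]
  · rintro ⟨j, hj, rfl⟩
    rw [Finset.mem_Icc] at hj
    obtain ⟨hj1, hj2⟩ := hj
    have hj3 : 2 * j ≤ n - 3 := by omega
    refine ⟨semMem_dThree n j hj1 hj3, ?_, ?_⟩
    · intro h0
      have h2 := congrFun h0 (2 * j)
      simp only [dThree, Pi.zero_apply] at h2
      split_ifs at h2
    · rintro a b ⟨ca, hsca, hcca, rfl⟩ ⟨cb, hscb, hccb, rfl⟩ hsum
      have hk : ∀ k, dThree j k = (ca (k - 1) + ca k) + (cb (k - 1) + cb k) :=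
        fun k => by simpa using congrFun hsum k
      have hca1 : ca (2 * j - 1) = ca (2 * j) := by
        have := hcca (2 * j - 1) ⟨j - 1, by omega⟩ (Finset.mem_Icc.mpr ⟨by omega, by omega⟩)
        rwa [show 2 * j - 1 + 1 = 2 * j from by omega] at this
      have hcb1 : cb (2 * j - 1) = cb (2 * j) := by
        have := hccb (2 * j - 1) ⟨j - 1, by omega⟩ (Finset.mem_Icc.mpr ⟨by omega, by omega⟩)
        rwa [show 2 * j - 1 + 1 = 2 * j from by omega] at this
      have hsum2 : ca (2 * j - 1) + cb (2 * j - 1) = 1 := by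
        have h2 := hk (2 * j)
        have hd : dThree j (2 * j) = 2 := by
          simp only [dThree]; split_ifs <;> omega
        rw [hd] at h2
        omega
      have key : ∀ cx : ℕ → ℕ,
          (∀ i, (i < 1 ∨ n - 3 < i) → cx i = 0) →
          (∀ i, Odd i → i ∈ Finset.Icc 1 (n - 3) → cx i = cx (i + 1)) →
          (∀ k, cx (k - 1) + cx k ≤ dThree j k) →
          cx (2 * j - 1) = 0 →
          (fun k => cx (k - 1) + cx k) = (0 : ℕ → ℕ) := by
        intro cx hs hc hle hz
        have h0 : ∀ i, Odd i → i ∈ Finset.Icc 1 (n - 3) → cx i = 0 := by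
          intro i hoi hmem
          obtain ⟨k, hk'⟩ := hoi
          rw [Finset.mem_Icc] at hmem
          by_cases hij : i = 2 * j - 1
          · rw [hij]; exact hz
          · have hd : dThree j (i + 1) = 0 := by
              simp only [dThree]
              rw [if_neg (by omega), if_neg (by omega), if_neg (by omega)]
            have hle2 := hle (i + 1)
            rw [hd, show i + 1 - 1 = i from by omega] at hle2
            omega
        have hall := all_zero n cx hs hc h0
        funext k; simp [hall]
      by_cases hz : ca (2 * j - 1) = 0
      · left
        exact key ca hsca hcca (fun k => by have := hk k; omega) hz
      · right
        exact key cb hscb hccb (fun k => by have := hk k; omega) (by omega)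

end Stmt12
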